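/- Let Γ1 = (V1, E1) and Γ2 = (V2, E2) be vertex-disjoint connected cubic graphs, let v1 ∈ V1 have neighbours a, b, c and suppose none of the three edges incident to v1 is a bridge of Γ1; let v2 ∈ V2 have neighbours d, e, f and suppose none of the three edges incident to v2 is a bridge of Γ2. Let ΓD be the graph with vertex set (V1 \ {v1}) ∪ (V2 \ {v2}) and edge set (E1 \ {(v1,a),(v1,b),(v1,c)}) ∪ (E2 \ {(v2,d),(v2,e),(v2,f)}) ∪ {(a,d), (b,e), (c,f)}. Then ΓD is a connected cubic graph and {(a,d), (b,e), (c,f)} is a 3-cracker of ΓD. -/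

import Mathlib

open SimpleGraph

/-- A graph is cubic if every vertex has exactly three neighbours. -/
def IsCubic {V : Type*} (G : SimpleGraph V) : Prop :=
  ∀ v : V, (G.neighborSet v).ncard = 3

/-- A cracker of `G`: a nonempty set of edges of `G`, no two of which share a
vertex, whose deletion disconnects `G`, while no proper subset disconnects `G`. -/
def IsCracker {V : Type*} (G : SimpleGraph V) (C : Set (Sym2 V)) : Prop :=
  C.Nonempty ∧ C ⊆ G.edgeSet ∧
    C.Pairwise (fun e f => ∀ v : V, ¬(v ∈ e ∧ v ∈ f)) ∧
    ¬(G.deleteEdges C).Connected ∧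
    ∀ C' : Set (Sym2 V), C' ⊂ C → (G.deleteEdges C').Connected

/-- A `k`-cracker is a cracker consisting of `k` edges. -/
def IsKCracker {V : Type*} (G : SimpleGraph V) (C : Set (Sym2 V)) (k : ℕ) : Prop :=
  IsCracker G C ∧ C.ncard = k

/-- The type 3 breeding operation: delete vertex v₁ of Γ₁ (with neighbours a, b, c) and
vertex v₂ of Γ₂ (with neighbours d, e, f), and add the edges (a,d), (b,e), (c,f). -/
def breed3 {V₁ V₂ : Type*} (G₁ : SimpleGraph V₁) (G₂ : SimpleGraph V₂)
    (v₁ : V₁) (v₂ : V₂) (a b c : V₁) (d e f : V₂) :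
    SimpleGraph ({x : V₁ // x ≠ v₁} ⊕ {y : V₂ // y ≠ v₂}) :=
  SimpleGraph.fromRel (fun p q =>
    (∃ x y : {x : V₁ // x ≠ v₁}, p = Sum.inl x ∧ q = Sum.inl y ∧ G₁.Adj x.1 y.1) ∨
    (∃ x y : {y : V₂ // y ≠ v₂}, p = Sum.inr x ∧ q = Sum.inr y ∧ G₂.Adj x.1 y.1) ∨
    (∃ (x : {x : V₁ // x ≠ v₁}) (y : {y : V₂ // y ≠ v₂}), p = Sum.inl x ∧ q = Sum.inr y ∧
      ((x.1 = a ∧ y.1 = d) ∨ (x.1 = b ∧ y.1 = e) ∨ (x.1 = c ∧ y.1 = f))))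

section One
variable {V : Type*} {G : SimpleGraph V} {v a b c : V}

lemma finite_of_ncard3 {s : Set V} (h : s.ncard = 3) : s.Finite := by
  rcases s.finite_or_infinite with hf | hf
  · exact hf
  · rw [hf.ncard] at h; omega

lemma nbr_eq (hc : IsCubic G) (ha : G.Adj v a) (hb : G.Adj v b) (hcc : G.Adj v c)
    (hab : a ≠ b) (hac : a ≠ c) (hbc : b ≠ c) : G.neighborSet v = {a, b, c} := by
  have hsub : ({a, b, c} : Set V) ⊆ G.neighborSet v := by
    intro x hx
    rcases hx with rfl | rfl | rfl <;> assumption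
  have hcard : ({a, b, c} : Set V).ncard = 3 := by
    rw [Set.ncard_insert_of_notMem (by simp [hab, hac]) (Set.toFinite _),
      Set.ncard_insert_of_notMem (by simp [hbc]) (Set.toFinite _), Set.ncard_singleton]
  exact (Set.eq_of_subset_of_ncard_le hsub (by rw [hc v, hcard])
    (finite_of_ncard3 (hc v))).symm

/-- last-edge-into-v lemma. -/
lemma reach_of_walk_aux {H : SimpleGraph V} (hH : H ≤ G) :
    ∀ {x u : V} (_ : H.Walk x u) (hu : v = u) (hx : x ≠ v),
      ∃ (z : V) (hz : z ≠ v), H.Adj z v ∧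
        (G.induce {x | x ≠ v}).Reachable ⟨x, hx⟩ ⟨z, hz⟩ := by
  intro x u w
  induction w with
  | nil => rintro rfl hx; exact absurd rfl hx
  | @cons x y u hadj p ih =>
    rintro rfl hx
    by_cases hy : y = v
    · subst hy
      exact ⟨x, hx, hadj, Reachable.refl _⟩
    · obtain ⟨z, hz, hzv, hr⟩ := ih rfl hy
      have hadj' : (G.induce {x | x ≠ v}).Adj ⟨x, hx⟩ ⟨y, hy⟩ := hH hadj
      exact ⟨z, hz, hzv, hadj'.reachable.trans hr⟩

lemma reach_of_walk {H : SimpleGraph V} (hH : H ≤ G) {x : V} (w : H.Walk x v)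
    (hx : x ≠ v) :
    ∃ (z : V) (hz : z ≠ v), H.Adj z v ∧
      (G.induce {x | x ≠ v}).Reachable ⟨x, hx⟩ ⟨z, hz⟩ :=
  reach_of_walk_aux hH w rfl hx

lemma induce_connected (hG : G.Connected) (hc : IsCubic G)
    (ha : G.Adj v a) (hb : G.Adj v b) (hcc : G.Adj v c)
    (hab : a ≠ b) (hac : a ≠ c) (hbc : b ≠ c)
    (hnba : ¬ G.IsBridge s(v, a)) (hnbb : ¬ G.IsBridge s(v, b))
    (hnbc : ¬ G.IsBridge s(v, c)) :
    (G.induce {x | x ≠ v}).Connected := by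
  have hnv := nbr_eq hc ha hb hcc hab hac hbc
  set D := G.induce {x | x ≠ v} with hD
  have hA : a ≠ v := ha.ne'
  have hB : b ≠ v := hb.ne'
  have hC : c ≠ v := hcc.ne'
  -- every x ≠ v reaches a, b or c
  have key : ∀ (x : V) (hx : x ≠ v),
      D.Reachable ⟨x, hx⟩ ⟨a, hA⟩ ∨ D.Reachable ⟨x, hx⟩ ⟨b, hB⟩ ∨
        D.Reachable ⟨x, hx⟩ ⟨c, hC⟩ := by
    intro x hx
    obtain ⟨w⟩ := hG.preconnected x v
    obtain ⟨z, hz, hzv, hr⟩ := reach_of_walk (le_refl G) w hx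
    have hzmem : z ∈ G.neighborSet v := hzv.symm
    rw [hnv] at hzmem
    rcases hzmem with rfl | rfl | rfl
    · exact Or.inl hr
    · exact Or.inr (Or.inl hr)
    · exact Or.inr (Or.inr hr)
  -- from the no-bridge condition: for each of a,b,c reach one of the other two
  have step : ∀ (z : V) (hz : z ≠ v), G.Adj v z → ¬ G.IsBridge s(v, z) →
      ∃ (z' : V) (hz' : z' ≠ v), z' ≠ z ∧ G.Adj v z' ∧ D.Reachable ⟨z, hz⟩ ⟨z', hz'⟩ := by
    intro z hz hvz hnb
    rw [isBridge_iff] at hnb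
    push_neg at hnb
    have hreach := hnb
    have hreach' : (G.deleteEdges {s(v, z)}).Reachable z v := hreach.symm
    obtain ⟨w⟩ := hreach'
    obtain ⟨z', hz', hz'v, hr⟩ := reach_of_walk (G.deleteEdges_le _) w hz
    have h1 : G.Adj z' v ∧ s(z', v) ∉ ({s(v, z)} : Set (Sym2 V)) := deleteEdges_adj.mp hz'v
    have hne : z' ≠ z := by
      rintro rfl
      exact h1.2 (by rw [Sym2.eq_swap]; rfl)
    exact ⟨z', hz', hne, h1.1.symm, hr⟩
  have geta := step a hA ha hnba
  have getb := step b hB hb hnbb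
  have getc := step c hC hcc hnbc
  -- convert: reach to one of the other two named vertices
  have conv : ∀ (z : V) (hz : z ≠ v), G.Adj v z → ¬ G.IsBridge s(v, z) →
      (D.Reachable ⟨z, hz⟩ ⟨a, hA⟩ ∧ z ≠ a) ∨ (D.Reachable ⟨z, hz⟩ ⟨b, hB⟩ ∧ z ≠ b) ∨
        (D.Reachable ⟨z, hz⟩ ⟨c, hC⟩ ∧ z ≠ c) := by
    intro z hz hvz hnb
    obtain ⟨z', hz', hne, hvz', hr⟩ := step z hz hvz hnb
    have : z' ∈ G.neighborSet v := hvz'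
    rw [hnv] at this
    rcases this with rfl | rfl | rfl
    · exact Or.inl ⟨hr, fun h => hne h.symm⟩
    · exact Or.inr (Or.inl ⟨hr, fun h => hne h.symm⟩)
    · exact Or.inr (Or.inr ⟨hr, fun h => hne h.symm⟩)
  have hAcon := conv a hA ha hnba
  have hBcon := conv b hB hb hnbb
  have hCcon := conv c hC hcc hnbc
  simp only [ne_eq, not_true_eq_false, and_false, false_or] at hAcon
  -- derive R A B and R A C
  have hABC : D.Reachable ⟨a, hA⟩ ⟨b, hB⟩ ∧ D.Reachable ⟨a, hA⟩ ⟨c, hC⟩ := by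
    rcases hAcon with ⟨hab', _⟩ | ⟨hac', _⟩
    · refine ⟨hab', ?_⟩
      rcases hCcon with ⟨h, _⟩ | ⟨h, _⟩ | ⟨h, hh⟩
      · exact h.symm
      · exact hab'.trans h.symm
      · exact absurd rfl hh
    · refine ⟨?_, hac'⟩
      rcases hBcon with ⟨h, _⟩ | ⟨h, hh⟩ | ⟨h, _⟩
      · exact h.symm
      · exact absurd rfl hh
      · exact hac'.trans h.symm
  have toA : ∀ p : {x | x ≠ v}, D.Reachable p ⟨a, hA⟩ := by
    rintro ⟨x, hx⟩
    rcases key x hx with h | h | h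
    · exact h
    · exact h.trans hABC.1.symm
    · exact h.trans hABC.2.symm
  haveI hne : Nonempty {x | x ≠ v} := ⟨⟨a, hA⟩⟩
  exact ⟨fun p q => (toA p).trans (toA q).symm⟩

end One

section Two
variable {V₁ V₂ : Type*} {G₁ : SimpleGraph V₁} {G₂ : SimpleGraph V₂}
  {v₁ : V₁} {v₂ : V₂} {a b c : V₁} {d e f : V₂}

lemma breed3_adj_ll {x y : {x : V₁ // x ≠ v₁}} :
    (breed3 G₁ G₂ v₁ v₂ a b c d e f).Adj (Sum.inl x) (Sum.inl y) ↔ G₁.Adj x.1 y.1 := by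
  rw [breed3, fromRel_adj]
  constructor
  · rintro ⟨hne, (⟨x', y', hx', hy', h⟩ | ⟨x', y', hx', hy', h⟩ | ⟨x', y', hx', hy', h⟩) |
      (⟨x', y', hx', hy', h⟩ | ⟨x', y', hx', hy', h⟩ | ⟨x', y', hx', hy', h⟩)⟩ <;>
        first
          | (cases hx'; cases hy'; first | exact h | exact h.symm)
          | simp_all
  · intro h
    refine ⟨?_, Or.inl (Or.inl ⟨x, y, rfl, rfl, h⟩)⟩
    simp only [ne_eq, Sum.inl.injEq]
    intro hxy
    exact h.ne (by rw [hxy])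

lemma breed3_adj_rr {x y : {y : V₂ // y ≠ v₂}} :
    (breed3 G₁ G₂ v₁ v₂ a b c d e f).Adj (Sum.inr x) (Sum.inr y) ↔ G₂.Adj x.1 y.1 := by
  rw [breed3, fromRel_adj]
  constructor
  · rintro ⟨hne, (⟨x', y', hx', hy', h⟩ | ⟨x', y', hx', hy', h⟩ | ⟨x', y', hx', hy', h⟩) |
      (⟨x', y', hx', hy', h⟩ | ⟨x', y', hx', hy', h⟩ | ⟨x', y', hx', hy', h⟩)⟩ <;>
        first
          | (cases hx'; cases hy'; first | exact h | exact h.symm)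
          | simp_all
  · intro h
    refine ⟨?_, Or.inl (Or.inr (Or.inl ⟨x, y, rfl, rfl, h⟩))⟩
    simp only [ne_eq, Sum.inr.injEq]
    intro hxy
    exact h.ne (by rw [hxy])

lemma breed3_adj_lr {x : {x : V₁ // x ≠ v₁}} {y : {y : V₂ // y ≠ v₂}} :
    (breed3 G₁ G₂ v₁ v₂ a b c d e f).Adj (Sum.inl x) (Sum.inr y) ↔
      (x.1 = a ∧ y.1 = d) ∨ (x.1 = b ∧ y.1 = e) ∨ (x.1 = c ∧ y.1 = f) := by
  rw [breed3, fromRel_adj]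
  constructor
  · rintro ⟨hne, (⟨x', y', hx', hy', h⟩ | ⟨x', y', hx', hy', h⟩ | ⟨x', y', hx', hy', h⟩) |
      (⟨x', y', hx', hy', h⟩ | ⟨x', y', hx', hy', h⟩ | ⟨x', y', hx', hy', h⟩)⟩ <;>
        first
          | (cases hx'; cases hy'; exact h)
          | simp_all
  · intro h
    exact ⟨Sum.inl_ne_inr, Or.inl (Or.inr (Or.inr ⟨x, y, rfl, rfl, h⟩))⟩

lemma breed3_adj_rl {x : {x : V₁ // x ≠ v₁}} {y : {y : V₂ // y ≠ v₂}} :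
    (breed3 G₁ G₂ v₁ v₂ a b c d e f).Adj (Sum.inr y) (Sum.inl x) ↔
      (x.1 = a ∧ y.1 = d) ∨ (x.1 = b ∧ y.1 = e) ∨ (x.1 = c ∧ y.1 = f) := by
  rw [adj_comm]; exact breed3_adj_lr

lemma breed3_adj_swap {p q : {x : V₁ // x ≠ v₁} ⊕ {y : V₂ // y ≠ v₂}} :
    (breed3 G₁ G₂ v₁ v₂ a b c d e f).Adj p q ↔
      (breed3 G₂ G₁ v₂ v₁ d e f a b c).Adj p.swap q.swap := by
  rcases p with x | x <;> rcases q with y | y <;>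
    simp only [Sum.swap_inl, Sum.swap_inr, breed3_adj_ll, breed3_adj_rr,
      breed3_adj_lr, breed3_adj_rl] <;> tauto
variable {V₁ V₂ : Type*} {G₁ : SimpleGraph V₁} {G₂ : SimpleGraph V₂}
  {v₁ : V₁} {v₂ : V₂} {a b c : V₁} {d e f : V₂}

lemma conn_aux {H : SimpleGraph ({x : V₁ // x ≠ v₁} ⊕ {y : V₂ // y ≠ v₂})}
    (hL : (G₁.induce {x | x ≠ v₁}).Connected)
    (hR : (G₂.induce {y | y ≠ v₂}).Connected)
    (hll : ∀ x y : {x : V₁ // x ≠ v₁}, G₁.Adj x.1 y.1 → H.Adj (Sum.inl x) (Sum.inl y))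
    (hrr : ∀ x y : {y : V₂ // y ≠ v₂}, G₂.Adj x.1 y.1 → H.Adj (Sum.inr x) (Sum.inr y))
    {p₀ : {x : V₁ // x ≠ v₁}} {q₀ : {y : V₂ // y ≠ v₂}}
    (hx : H.Adj (Sum.inl p₀) (Sum.inr q₀)) : H.Connected := by
  let φ₁ : G₁.induce {x | x ≠ v₁} →g H :=
    ⟨fun z => Sum.inl ⟨z.1, z.2⟩, fun {u w} h => hll _ _ h⟩
  let φ₂ : G₂.induce {y | y ≠ v₂} →g H :=
    ⟨fun z => Sum.inr ⟨z.1, z.2⟩, fun {u w} h => hrr _ _ h⟩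
  have leftReach : ∀ z : {x : V₁ // x ≠ v₁}, H.Reachable (Sum.inl z) (Sum.inl p₀) := by
    intro z
    have := Reachable.map φ₁ (hL.preconnected ⟨z.1, z.2⟩ ⟨p₀.1, p₀.2⟩)
    exact this
  have rightReach : ∀ z : {y : V₂ // y ≠ v₂}, H.Reachable (Sum.inr z) (Sum.inr q₀) := by
    intro z
    have := Reachable.map φ₂ (hR.preconnected ⟨z.1, z.2⟩ ⟨q₀.1, q₀.2⟩)
    exact this
  have toP : ∀ t, H.Reachable t (Sum.inl p₀) := by
    rintro (z | z)
    · exact leftReach z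
    · exact (rightReach z).trans hx.symm.reachable
  haveI : Nonempty ({x : V₁ // x ≠ v₁} ⊕ {y : V₂ // y ≠ v₂}) := ⟨Sum.inl p₀⟩
  exact ⟨fun s t => (toP s).trans (toP t).symm⟩

lemma walk_isLeft {H : SimpleGraph ({x : V₁ // x ≠ v₁} ⊕ {y : V₂ // y ≠ v₂})}
    (hno : ∀ (x : {x : V₁ // x ≠ v₁}) (y : {y : V₂ // y ≠ v₂}),
      ¬ H.Adj (Sum.inl x) (Sum.inr y)) :
    ∀ {p q} (_ : H.Walk p q), p.isLeft = q.isLeft := by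
  intro p q w
  induction w with
  | nil => rfl
  | @cons p r q hadj w ih =>
    rw [← ih]
    rcases p with x | x <;> rcases r with y | y
    · rfl
    · exact absurd hadj (hno x y)
    · exact absurd hadj.symm (hno y x)
    · rfl

lemma finite_of_ncard3' {V : Type*} {s : Set V} (h : s.ncard = 3) : s.Finite := by
  rcases s.finite_or_infinite with hf | hf
  · exact hf
  · rw [hf.ncard] at h; omega

lemma cubic_at_inl (hc₁ : IsCubic G₁)
    (hnv : G₁.neighborSet v₁ = {a, b, c})
    (hva : G₁.Adj v₁ a) (hvb : G₁.Adj v₁ b) (hvc : G₁.Adj v₁ c)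
    (hab : a ≠ b) (hac : a ≠ c) (hbc : b ≠ c)
    (hd : d ≠ v₂) (he : e ≠ v₂) (hf : f ≠ v₂)
    (x : {x : V₁ // x ≠ v₁}) :
    ((breed3 G₁ G₂ v₁ v₂ a b c d e f).neighborSet (Sum.inl x)).ncard = 3 := by
  classical
  set L : Set {x : V₁ // x ≠ v₁} := {z | G₁.Adj x.1 z.1} with hLdef
  set R : Set {y : V₂ // y ≠ v₂} :=
    {z | (x.1 = a ∧ z.1 = d) ∨ (x.1 = b ∧ z.1 = e) ∨ (x.1 = c ∧ z.1 = f)} with hRdef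
  have hsplit : (breed3 G₁ G₂ v₁ v₂ a b c d e f).neighborSet (Sum.inl x) =
      (Sum.inl '' L) ∪ (Sum.inr '' R) := by
    ext q
    rcases q with y | y <;>
      simp [mem_neighborSet, breed3_adj_ll, breed3_adj_lr, hLdef, hRdef]
  -- the image under val of L
  have hLval : Subtype.val '' L = G₁.neighborSet x.1 \ {v₁} := by
    ext y
    simp only [Set.mem_image, Set.mem_setOf_eq, Set.mem_diff, Set.mem_singleton_iff,
      mem_neighborSet, hLdef]
    constructor
    · rintro ⟨⟨z, hz⟩, hadj, rfl⟩
      exact ⟨hadj, hz⟩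
    · rintro ⟨hadj, hy⟩
      exact ⟨⟨y, hy⟩, hadj, rfl⟩
  have hnfin : (G₁.neighborSet x.1).Finite := finite_of_ncard3' (hc₁ x.1)
  have hLfin : L.Finite := by
    refine Set.Finite.of_finite_image ?_ Subtype.val_injective.injOn
    rw [hLval]
    exact hnfin.diff
  have hLcard : L.ncard = (G₁.neighborSet x.1 \ {v₁}).ncard := by
    rw [← hLval, Set.ncard_image_of_injective _ Subtype.val_injective]
  have hdisj : Disjoint (Sum.inl '' L : Set _) (Sum.inr '' R) := by
    rw [Set.disjoint_left]
    rintro q ⟨z, _, rfl⟩ ⟨z', _, hq⟩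
    exact Sum.inl_ne_inr hq.symm
  have hcount : ∀ (hR3 : R.Finite), (_ : True) →
      ((breed3 G₁ G₂ v₁ v₂ a b c d e f).neighborSet (Sum.inl x)).ncard =
        L.ncard + R.ncard := by
    intro hRfin _
    rw [hsplit, Set.ncard_union_eq hdisj (hLfin.image _) (hRfin.image _),
      Set.ncard_image_of_injective _ Sum.inl_injective,
      Set.ncard_image_of_injective _ Sum.inr_injective]
  by_cases hxa : x.1 = a
  · have hR1 : R = {⟨d, hd⟩} := by
      ext z
      simp only [hRdef, Set.mem_setOf_eq, Set.mem_singleton_iff]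
      constructor
      · rintro (⟨_, h⟩ | ⟨h, _⟩ | ⟨h, _⟩)
        · exact Subtype.ext h
        · exact absurd (hxa.symm.trans h) hab
        · exact absurd (hxa.symm.trans h) hac
      · rintro rfl; exact Or.inl ⟨hxa, rfl⟩
    have hv₁mem : v₁ ∈ G₁.neighborSet x.1 := by rw [hxa]; exact hva.symm
    rw [hcount (by rw [hR1]; exact Set.finite_singleton _) trivial, hLcard, hR1,
      Set.ncard_singleton, Set.ncard_diff_singleton_of_mem hv₁mem, hc₁ x.1]
  · by_cases hxb : x.1 = b
    · have hR1 : R = {⟨e, he⟩} := by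
        ext z
        simp only [hRdef, Set.mem_setOf_eq, Set.mem_singleton_iff]
        constructor
        · rintro (⟨h, _⟩ | ⟨_, h⟩ | ⟨h, _⟩)
          · exact absurd (h.symm.trans hxb) hab
          · exact Subtype.ext h
          · exact absurd (hxb.symm.trans h) hbc
        · rintro rfl; exact Or.inr (Or.inl ⟨hxb, rfl⟩)
      have hv₁mem : v₁ ∈ G₁.neighborSet x.1 := by rw [hxb]; exact hvb.symm
      rw [hcount (by rw [hR1]; exact Set.finite_singleton _) trivial, hLcard, hR1,
        Set.ncard_singleton, Set.ncard_diff_singleton_of_mem hv₁mem, hc₁ x.1]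
    · by_cases hxc : x.1 = c
      · have hR1 : R = {⟨f, hf⟩} := by
          ext z
          simp only [hRdef, Set.mem_setOf_eq, Set.mem_singleton_iff]
          constructor
          · rintro (⟨h, _⟩ | ⟨h, _⟩ | ⟨_, h⟩)
            · exact absurd (h.symm.trans hxc) hac
            · exact absurd (h.symm.trans hxc) hbc
            · exact Subtype.ext h
          · rintro rfl; exact Or.inr (Or.inr ⟨hxc, rfl⟩)
        have hv₁mem : v₁ ∈ G₁.neighborSet x.1 := by rw [hxc]; exact hvc.symm
        rw [hcount (by rw [hR1]; exact Set.finite_singleton _) trivial, hLcard, hR1,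
          Set.ncard_singleton, Set.ncard_diff_singleton_of_mem hv₁mem, hc₁ x.1]
      · have hR1 : R = ∅ := by
          ext z
          simp only [hRdef, Set.mem_setOf_eq, Set.mem_empty_iff_false, iff_false]
          rintro (⟨h, _⟩ | ⟨h, _⟩ | ⟨h, _⟩)
          · exact hxa h
          · exact hxb h
          · exact hxc h
        have hv₁nmem : v₁ ∉ G₁.neighborSet x.1 := by
          intro hmem
          have : x.1 ∈ G₁.neighborSet v₁ := hmem.symm
          rw [hnv] at this
          rcases this with h | h | h
          · exact hxa h
          · exact hxb h
          · exact hxc h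
        rw [hcount (by rw [hR1]; exact Set.finite_empty) trivial, hLcard, hR1,
          Set.ncard_empty, Set.diff_singleton_eq_self hv₁nmem, hc₁ x.1]
end Two

/-- the result of a type 3 breeding operation on connected cubic graphs,
performed at vertices none of whose incident edges is a bridge, is a connected cubic
graph in which the three new edges form a 3-cracker. -/
theorem breed3_spec {V₁ V₂ : Type*} (G₁ : SimpleGraph V₁) (G₂ : SimpleGraph V₂)
    (h₁ : G₁.Connected) (h₂ : G₂.Connected) (hc₁ : IsCubic G₁) (hc₂ : IsCubic G₂)
    (v₁ : V₁) (a b c : V₁) (v₂ : V₂) (d e f : V₂)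
    (hva : G₁.Adj v₁ a) (hvb : G₁.Adj v₁ b) (hvc : G₁.Adj v₁ c)
    (hab : a ≠ b) (hac : a ≠ c) (hbc : b ≠ c)
    (hnba : ¬ G₁.IsBridge s(v₁, a)) (hnbb : ¬ G₁.IsBridge s(v₁, b))
    (hnbc : ¬ G₁.IsBridge s(v₁, c))
    (hvd : G₂.Adj v₂ d) (hve : G₂.Adj v₂ e) (hvf : G₂.Adj v₂ f)
    (hde : d ≠ e) (hdf : d ≠ f) (hef : e ≠ f)
    (hnbd : ¬ G₂.IsBridge s(v₂, d)) (hnbe : ¬ G₂.IsBridge s(v₂, e))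
    (hnbf : ¬ G₂.IsBridge s(v₂, f)) :
    (breed3 G₁ G₂ v₁ v₂ a b c d e f).Connected ∧
      IsCubic (breed3 G₁ G₂ v₁ v₂ a b c d e f) ∧
      IsKCracker (breed3 G₁ G₂ v₁ v₂ a b c d e f)
        {s(Sum.inl ⟨a, hva.ne'⟩, Sum.inr ⟨d, hvd.ne'⟩),
         s(Sum.inl ⟨b, hvb.ne'⟩, Sum.inr ⟨e, hve.ne'⟩),
         s(Sum.inl ⟨c, hvc.ne'⟩, Sum.inr ⟨f, hvf.ne'⟩)} 3 := by
  classical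
  set Γ := breed3 G₁ G₂ v₁ v₂ a b c d e f with hΓ
  have hnv₁ : G₁.neighborSet v₁ = {a, b, c} := nbr_eq hc₁ hva hvb hvc hab hac hbc
  have hnv₂ : G₂.neighborSet v₂ = {d, e, f} := nbr_eq hc₂ hvd hve hvf hde hdf hef
  have hL : (G₁.induce {x | x ≠ v₁}).Connected :=
    induce_connected h₁ hc₁ hva hvb hvc hab hac hbc hnba hnbb hnbc
  have hR : (G₂.induce {y | y ≠ v₂}).Connected :=
    induce_connected h₂ hc₂ hvd hve hvf hde hdf hef hnbd hnbe hnbf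
  set A : {x : V₁ // x ≠ v₁} := ⟨a, hva.ne'⟩ with hA
  set B : {x : V₁ // x ≠ v₁} := ⟨b, hvb.ne'⟩ with hB
  set Cv : {x : V₁ // x ≠ v₁} := ⟨c, hvc.ne'⟩ with hCv
  set D : {y : V₂ // y ≠ v₂} := ⟨d, hvd.ne'⟩ with hD
  set E : {y : V₂ // y ≠ v₂} := ⟨e, hve.ne'⟩ with hE
  set F : {y : V₂ // y ≠ v₂} := ⟨f, hvf.ne'⟩ with hF
  set E₁ : Sym2 ({x : V₁ // x ≠ v₁} ⊕ {y : V₂ // y ≠ v₂}) := s(Sum.inl A, Sum.inr D) with hE₁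
  set E₂ : Sym2 ({x : V₁ // x ≠ v₁} ⊕ {y : V₂ // y ≠ v₂}) := s(Sum.inl B, Sum.inr E) with hE₂
  set E₃ : Sym2 ({x : V₁ // x ≠ v₁} ⊕ {y : V₂ // y ≠ v₂}) := s(Sum.inl Cv, Sum.inr F) with hE₃
  set C : Set (Sym2 ({x : V₁ // x ≠ v₁} ⊕ {y : V₂ // y ≠ v₂})) := {E₁, E₂, E₃} with hC
  have hadj₁ : Γ.Adj (Sum.inl A) (Sum.inr D) := breed3_adj_lr.mpr (Or.inl ⟨rfl, rfl⟩)
  have hadj₂ : Γ.Adj (Sum.inl B) (Sum.inr E) := breed3_adj_lr.mpr (Or.inr (Or.inl ⟨rfl, rfl⟩))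
  have hadj₃ : Γ.Adj (Sum.inl Cv) (Sum.inr F) := breed3_adj_lr.mpr (Or.inr (Or.inr ⟨rfl, rfl⟩))
  -- distinctness of the three edges
  have hne₁₂ : E₁ ≠ E₂ := by
    simp only [hE₁, hE₂, hA, hB, hD, hE, Sym2.eq_iff, Sum.inl.injEq, Sum.inr.injEq,
      Subtype.mk.injEq, reduceCtorEq]
    simp [hab]
  have hne₁₃ : E₁ ≠ E₃ := by
    simp only [hE₁, hE₃, hA, hCv, hD, hF, Sym2.eq_iff, Sum.inl.injEq, Sum.inr.injEq,
      Subtype.mk.injEq, reduceCtorEq]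
    simp [hac]
  have hne₂₃ : E₂ ≠ E₃ := by
    simp only [hE₂, hE₃, hB, hCv, hE, hF, Sym2.eq_iff, Sum.inl.injEq, Sum.inr.injEq,
      Subtype.mk.injEq, reduceCtorEq]
    simp [hbc]
  -- no edge of the form s(inl _, inl _) or s(inr _, inr _) lies in C
  have hllC : ∀ (x y : {x : V₁ // x ≠ v₁}), s(Sum.inl x, Sum.inl y) ∉ C := by
    intro x y hmem
    rcases hmem with h | h | h <;> simp [hE₁, hE₂, hE₃, Sym2.eq_iff] at h
  have hrrC : ∀ (x y : {y : V₂ // y ≠ v₂}), s(Sum.inr x, Sum.inr y) ∉ C := by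
    intro x y hmem
    rcases hmem with h | h | h <;> simp [hE₁, hE₂, hE₃, Sym2.eq_iff] at h
  refine ⟨?_, ?_, ⟨⟨?_, ?_, ?_, ?_, ?_⟩, ?_⟩⟩
  · -- connected
    exact conn_aux hL hR (fun x y h => breed3_adj_ll.mpr h)
      (fun x y h => breed3_adj_rr.mpr h) hadj₁
  · -- cubic
    rintro (x | y)
    · exact cubic_at_inl hc₁ hnv₁ hva hvb hvc hab hac hbc hvd.ne' hve.ne' hvf.ne' x
    · have hsw : Γ.neighborSet (Sum.inr y) =
          Sum.swap '' ((breed3 G₂ G₁ v₂ v₁ d e f a b c).neighborSet (Sum.inl y)) := by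
        ext q
        simp only [mem_neighborSet, Set.mem_image]
        constructor
        · intro hq
          exact ⟨q.swap, breed3_adj_swap.mp hq, q.swap_swap⟩
        · rintro ⟨r, hr, rfl⟩
          exact breed3_adj_swap.mpr (by rwa [Sum.swap_swap])
      rw [hsw, Set.ncard_image_of_injective _
        (Function.LeftInverse.injective (g := Sum.swap) Sum.swap_swap)]
      exact cubic_at_inl hc₂ hnv₂ hvd hve hvf hde hdf hef hva.ne' hvb.ne' hvc.ne' y
  · -- nonempty
    exact ⟨E₁, Set.mem_insert _ _⟩
  · -- subset of the edge set
    intro q hq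
    simp only [hC, Set.mem_insert_iff, Set.mem_singleton_iff] at hq
    rcases hq with rfl | rfl | rfl
    · exact hadj₁
    · exact hadj₂
    · exact hadj₃
  · -- pairwise vertex-disjoint
    have key : ∀ (x x' : {x : V₁ // x ≠ v₁}) (y y' : {y : V₂ // y ≠ v₂}), x ≠ x' → y ≠ y' →
        ∀ v, ¬(v ∈ s(Sum.inl x, Sum.inr y) ∧ v ∈ (s(Sum.inl x', Sum.inr y') :
          Sym2 ({x : V₁ // x ≠ v₁} ⊕ {y : V₂ // y ≠ v₂}))) := by
      rintro x x' y y' hx hy v ⟨h1, h2⟩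
      rcases Sym2.mem_iff.mp h1 with rfl | rfl <;> rcases Sym2.mem_iff.mp h2 with h | h
      · exact hx (Sum.inl_injective h)
      · exact Sum.inl_ne_inr h
      · exact Sum.inr_ne_inl h
      · exact hy (Sum.inr_injective h)
    have hAB : A ≠ B := fun h => hab (congrArg Subtype.val h)
    have hAC : A ≠ Cv := fun h => hac (congrArg Subtype.val h)
    have hBC : B ≠ Cv := fun h => hbc (congrArg Subtype.val h)
    have hDE : D ≠ E := fun h => hde (congrArg Subtype.val h)
    have hDF : D ≠ F := fun h => hdf (congrArg Subtype.val h)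
    have hEF : E ≠ F := fun h => hef (congrArg Subtype.val h)
    intro q hq r hr hne
    simp only [hC, Set.mem_insert_iff, Set.mem_singleton_iff] at hq hr
    rcases hq with rfl | rfl | rfl <;> rcases hr with rfl | rfl | rfl
    · exact absurd rfl hne
    · exact key _ _ _ _ hAB hDE
    · exact key _ _ _ _ hAC hDF
    · exact key _ _ _ _ hAB.symm hDE.symm
    · exact absurd rfl hne
    · exact key _ _ _ _ hBC hEF
    · exact key _ _ _ _ hAC.symm hDF.symm
    · exact key _ _ _ _ hBC.symm hEF.symm
    · exact absurd rfl hne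
  · -- deleting C disconnects
    intro hcon
    have hno : ∀ (x : {x : V₁ // x ≠ v₁}) (y : {y : V₂ // y ≠ v₂}),
        ¬ (Γ.deleteEdges C).Adj (Sum.inl x) (Sum.inr y) := by
      intro x y hadj
      rw [deleteEdges_adj] at hadj
      obtain ⟨hadj, hmem⟩ := hadj
      rcases breed3_adj_lr.mp hadj with ⟨h1, h2⟩ | ⟨h1, h2⟩ | ⟨h1, h2⟩
      · obtain rfl : x = A := Subtype.ext h1
        obtain rfl : y = D := Subtype.ext h2
        exact hmem (Set.mem_insert _ _)
      · obtain rfl : x = B := Subtype.ext h1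
        obtain rfl : y = E := Subtype.ext h2
        exact hmem (Set.mem_insert_of_mem _ (Set.mem_insert _ _))
      · obtain rfl : x = Cv := Subtype.ext h1
        obtain rfl : y = F := Subtype.ext h2
        exact hmem (Set.mem_insert_of_mem _ (Set.mem_insert_of_mem _ rfl))
    obtain ⟨w⟩ := hcon.preconnected (Sum.inl A) (Sum.inr D)
    simpa using walk_isLeft hno w
  · -- deleting a proper subset keeps it connected
    intro C' hC'
    obtain ⟨e₀, he₀C, he₀⟩ := Set.exists_of_ssubset hC'
    have hsubC' : C' ⊆ C := hC'.subset
    have hll' : ∀ (x y : {x : V₁ // x ≠ v₁}), G₁.Adj x.1 y.1 →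
        (Γ.deleteEdges C').Adj (Sum.inl x) (Sum.inl y) := fun x y h =>
      deleteEdges_adj.mpr ⟨breed3_adj_ll.mpr h, fun hmem => hllC x y (hsubC' hmem)⟩
    have hrr' : ∀ (x y : {y : V₂ // y ≠ v₂}), G₂.Adj x.1 y.1 →
        (Γ.deleteEdges C').Adj (Sum.inr x) (Sum.inr y) := fun x y h =>
      deleteEdges_adj.mpr ⟨breed3_adj_rr.mpr h, fun hmem => hrrC x y (hsubC' hmem)⟩
    simp only [hC, Set.mem_insert_iff, Set.mem_singleton_iff] at he₀C
    rcases he₀C with rfl | rfl | rfl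
    · exact conn_aux hL hR hll' hrr' (deleteEdges_adj.mpr ⟨hadj₁, he₀⟩)
    · exact conn_aux hL hR hll' hrr' (deleteEdges_adj.mpr ⟨hadj₂, he₀⟩)
    · exact conn_aux hL hR hll' hrr' (deleteEdges_adj.mpr ⟨hadj₃, he₀⟩)
  · -- three edges
    rw [hC, Set.ncard_insert_of_notMem (by simp [hne₁₂, hne₁₃])
        ((Set.finite_singleton _).insert _),
      Set.ncard_insert_of_notMem (by simp [hne₂₃]) (Set.finite_singleton _),
      Set.ncard_singleton]
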